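/- (Correctness of the full cooperative repair scheme) Assume h ≥ 2. Let i_1, …, i_h ∈ {0, …, n−1} be distinct failed-node indices and R ⊆ {0, …, n−1} \ {i_1, …, i_h} a helper set with |R| = d. Suppose two codewords c, c' ∈ C satisfy, for every j ∈ {1, …, h}: c_{u,d−k+j,a} = c'_{u,d−k+j,a} for all u ∈ R, a ∈ V_{i_j}, and c_{u,b,a} + c_{u,d−k+j,a(i_j,b)} = c'_{u,b,a} + c'_{u,d−k+j,a(i_j,b)} for all u ∈ R, b ∈ {1, …, d−k}, a ∈ V_{i_j}. Then c_{i_j,b,a} = c'_{i_j,b,a} for every j ∈ {1, …, h}, every b ∈ {1, …, d−k+h}, and every a ∈ {0, …, s−1}^n; that is, the downloaded data determine the entire contents of all h failed nodes. -/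

import Mathlib

open Finset Polynomial

private lemma vandermonde_zero {F : Type*} [Field F] {ι : Type*} [DecidableEq ι]
    (r : ℕ) (S : Finset ι) (θ : ι → F) (hθ : Set.InjOn θ S) (hcard : S.card ≤ r)
    (y : ι → F) (h : ∀ t < r, ∑ p ∈ S, θ p ^ t * y p = 0) :
    ∀ p ∈ S, y p = 0 := by
  intro p hp
  set P : Polynomial F := ∏ q ∈ S.erase p, (X - C (θ q)) with hP
  have hdeg : P.natDegree < r := by
    have h1 : P.natDegree ≤ (S.erase p).card := by
      refine le_trans (Polynomial.natDegree_prod_le _ _) ?_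
      refine le_trans (Finset.sum_le_card_nsmul _ _ 1
        fun q _ => Polynomial.natDegree_X_sub_C_le _) ?_
      simp
    have h2 : (S.erase p).card < S.card := Finset.card_erase_lt_of_mem hp
    omega
  have hsum : ∑ q ∈ S, P.eval (θ q) * y q = 0 := by
    calc ∑ q ∈ S, P.eval (θ q) * y q
        = ∑ q ∈ S, ∑ t ∈ Finset.range r, P.coeff t * (θ q ^ t * y q) := by
          refine Finset.sum_congr rfl fun q _ => ?_
          rw [Polynomial.eval_eq_sum_range' hdeg, Finset.sum_mul]
          exact Finset.sum_congr rfl fun t _ => by ring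
      _ = ∑ t ∈ Finset.range r, P.coeff t * ∑ q ∈ S, θ q ^ t * y q := by
          rw [Finset.sum_comm]
          exact Finset.sum_congr rfl fun t _ => by rw [Finset.mul_sum]
      _ = 0 := Finset.sum_eq_zero fun t ht => by
          rw [h t (Finset.mem_range.mp ht), mul_zero]
  have hzero : ∀ q ∈ S, q ≠ p → P.eval (θ q) * y q = 0 := by
    intro q hq hqp
    have : P.eval (θ q) = 0 := by
      rw [hP, Polynomial.eval_prod]
      exact Finset.prod_eq_zero (Finset.mem_erase.mpr ⟨hqp, hq⟩) (by simp)
    rw [this, zero_mul]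
  rw [Finset.sum_eq_single_of_mem p hp hzero] at hsum
  have hne : P.eval (θ p) ≠ 0 := by
    rw [hP, Polynomial.eval_prod]
    refine Finset.prod_ne_zero_iff.mpr fun q hq => ?_
    have hqS := Finset.mem_of_mem_erase hq
    have hqp := Finset.ne_of_mem_erase hq
    simp only [Polynomial.eval_sub, Polynomial.eval_X, Polynomial.eval_C]
    exact sub_ne_zero_of_ne fun hE => hqp (hθ hqS hp hE.symm)
  exact (mul_eq_zero.mp hsum).resolve_left hne


private lemma key_lemma {F : Type*} [Field F] {n s r : ℕ}
    (lam : Fin n → F) (mu : Fin s → F)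
    (hlam : Function.Injective lam)
    (hmu : ∀ e e' : Fin s, (e : ℕ) ≠ 0 → (e' : ℕ) ≠ 0 → mu e = mu e' → e = e')
    (hlammu : ∀ (i : Fin n) (e : Fin s), (e : ℕ) ≠ 0 → lam i ≠ mu e)
    (i0 : Fin n) (R : Finset (Fin n))
    (hcard : (univ \ R).card + (univ.filter (fun e : Fin s => (e : ℕ) ≠ 0)).card ≤ r)
    (X : Fin n → (Fin n → Fin s) → F) (Z : Fin s → (Fin n → Fin s) → F)
    (hX0 : ∀ u ∈ R, ∀ a : Fin n → Fin s, (a i0 : ℕ) = 0 → X u a = 0)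
    (heq : ∀ t < r, ∀ a : Fin n → Fin s, (a i0 : ℕ) = 0 →
      ∑ i, lam i ^ t * X i a
        + ∑ e ∈ univ.filter (fun e : Fin s => (e : ℕ) ≠ 0), mu e ^ t * Z e a
        + ∑ i ∈ univ.filter (fun i : Fin n => i ≠ i0 ∧ (a i : ℕ) = 0),
            ∑ e ∈ univ.filter (fun e : Fin s => (e : ℕ) ≠ 0),
              mu e ^ t * X i (Function.update a i e) = 0) :
    ∀ a : Fin n → Fin s, (a i0 : ℕ) = 0 →
      (∀ i, X i a = 0) ∧ ∀ e : Fin s, (e : ℕ) ≠ 0 → Z e a = 0 := by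
  suffices H : ∀ m : ℕ, ∀ a : Fin n → Fin s, (a i0 : ℕ) = 0 →
      (univ.filter (fun i : Fin n => i ≠ i0 ∧ i ∉ R ∧ (a i : ℕ) = 0)).card = m →
      (∀ i, X i a = 0) ∧ ∀ e : Fin s, (e : ℕ) ≠ 0 → Z e a = 0 by
    intro a ha; exact H _ a ha rfl
  intro m
  induction m using Nat.strong_induction_on with
  | _ m ih =>
    intro a ha hm
    -- reduced Vandermonde system
    have hred : ∀ t < r, ∑ i ∈ univ \ R, lam i ^ t * X i a
        + ∑ e ∈ univ.filter (fun e : Fin s => (e : ℕ) ≠ 0), mu e ^ t * Z e a = 0 := by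
      intro t ht
      have h0 := heq t ht a ha
      have h1 : ∑ i, lam i ^ t * X i a = ∑ i ∈ univ \ R, lam i ^ t * X i a := by
        rw [← Finset.sum_sdiff (Finset.subset_univ R)]
        have hz : ∑ i ∈ R, lam i ^ t * X i a = 0 :=
          Finset.sum_eq_zero fun u hu => by rw [hX0 u hu a ha, mul_zero]
        rw [hz, add_zero]
      have h2 : ∑ i ∈ univ.filter (fun i : Fin n => i ≠ i0 ∧ (a i : ℕ) = 0),
          ∑ e ∈ univ.filter (fun e : Fin s => (e : ℕ) ≠ 0),
            mu e ^ t * X i (Function.update a i e) = 0 := by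
        refine Finset.sum_eq_zero fun i hi => ?_
        simp only [Finset.mem_filter, Finset.mem_univ, true_and] at hi
        obtain ⟨hii0, hai⟩ := hi
        refine Finset.sum_eq_zero fun e he => ?_
        simp only [Finset.mem_filter, Finset.mem_univ, true_and] at he
        have hae : ((Function.update a i e) i0 : ℕ) = 0 := by
          rw [Function.update_of_ne (Ne.symm hii0)]; exact ha
        by_cases hiR : i ∈ R
        · rw [hX0 i hiR _ hae, mul_zero]
        · have hset : univ.filter (fun i' : Fin n =>
              i' ≠ i0 ∧ i' ∉ R ∧ ((Function.update a i e) i' : ℕ) = 0)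
              = (univ.filter (fun i' : Fin n =>
                  i' ≠ i0 ∧ i' ∉ R ∧ (a i' : ℕ) = 0)).erase i := by
            ext i'
            simp only [Finset.mem_erase, Finset.mem_filter, Finset.mem_univ, true_and]
            by_cases hii' : i' = i
            · subst hii'
              simp only [Function.update_self]
              constructor
              · rintro ⟨-, -, hcontr⟩; exact absurd hcontr he
              · rintro ⟨hcontr, -⟩; exact absurd rfl hcontr
            · rw [Function.update_of_ne hii']
              tauto
          have hmem : i ∈ univ.filter (fun i' : Fin n =>
              i' ≠ i0 ∧ i' ∉ R ∧ (a i' : ℕ) = 0) := by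
            simp [hii0, hiR, hai]
          have hlt : (univ.filter (fun i' : Fin n =>
              i' ≠ i0 ∧ i' ∉ R ∧ ((Function.update a i e) i' : ℕ) = 0)).card < m := by
            rw [hset, ← hm]
            exact Finset.card_erase_lt_of_mem hmem
          rw [(ih _ hlt (Function.update a i e) hae rfl).1 i, mul_zero]
      rw [h1, h2, add_zero] at h0
      exact h0
    have hS : ((univ \ R).disjSum (univ.filter fun e : Fin s => (e : ℕ) ≠ 0)).card ≤ r := by
      rwa [Finset.card_disjSum]
    have hinj : Set.InjOn (Sum.elim lam mu)
        ((univ \ R).disjSum (univ.filter fun e : Fin s => (e : ℕ) ≠ 0)) := by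
      intro p hp q hq hpq
      match p, q with
      | Sum.inl i, Sum.inl i' =>
        simp only [Sum.elim_inl] at hpq
        exact congrArg Sum.inl (hlam hpq)
      | Sum.inl i, Sum.inr e =>
        rw [Finset.mem_coe, Finset.inr_mem_disjSum, Finset.mem_filter] at hq
        simp only [Sum.elim_inl, Sum.elim_inr] at hpq
        exact absurd hpq (hlammu i e hq.2)
      | Sum.inr e, Sum.inl i =>
        rw [Finset.mem_coe, Finset.inr_mem_disjSum, Finset.mem_filter] at hp
        simp only [Sum.elim_inl, Sum.elim_inr] at hpq
        exact absurd hpq.symm (hlammu i e hp.2)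
      | Sum.inr e, Sum.inr e' =>
        rw [Finset.mem_coe, Finset.inr_mem_disjSum, Finset.mem_filter] at hp hq
        simp only [Sum.elim_inr] at hpq
        exact congrArg Sum.inr (hmu e e' hp.2 hq.2 hpq)
    have hv := vandermonde_zero r _ (Sum.elim lam mu) hinj hS
      (Sum.elim (fun i => X i a) (fun e => Z e a)) (by
        intro t ht
        rw [Finset.sum_disjSum]
        simpa using hred t ht)
    constructor
    · intro i
      by_cases hiR : i ∈ R
      · exact hX0 i hiR a ha
      · simpa using hv (Sum.inl i) (by simp [Finset.inl_mem_disjSum, hiR])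
    · intro e he
      simpa using hv (Sum.inr e) (by simp [Finset.inr_mem_disjSum, he])

/-- The code `C` of Construction 1: arrays `c = (c_{i,b,a})` with `i ∈ [0,n)`,
`b ∈ {1,…,B}` (here `B = d-k+h`; entries of `c` with `b` outside this range are
irrelevant), and `a ∈ {0,…,s-1}^n`, satisfying the parity-check equations
`∑_i λ_i^t c_{i,b,a} + ∑_i δ(a_i) ∑_{e=1}^{s-1} μ_e^t c_{i,b,a(i,e)} = 0`
for all `t ∈ [0,r)`, all `b ∈ {1,…,B}`, and all `a`. -/
def codeC {F : Type*} [Field F] (n r s B : ℕ) (lam : Fin n → F) (mu : Fin s → F)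
    (c : Fin n → ℕ → (Fin n → Fin s) → F) : Prop :=
  ∀ t < r, ∀ b : ℕ, 1 ≤ b → b ≤ B → ∀ a : Fin n → Fin s,
    ∑ i, lam i ^ t * c i b a
      + ∑ i, (if (a i : ℕ) = 0 then
          ∑ e ∈ univ.filter (fun e : Fin s => (e : ℕ) ≠ 0),
            mu e ^ t * c i b (Function.update a i e)
        else 0) = 0

private theorem repair_aux {F : Type*} [Field F]
    (n k d h r s : ℕ)
    (hnk : n = k + r) (hkd : k < d) (hdn : d + h ≤ n) (hs : s = d - k + 1)
    (lam : Fin n → F) (mu : Fin s → F)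
    (hlam : Function.Injective lam)
    (hmu : ∀ e e' : Fin s, (e : ℕ) ≠ 0 → (e' : ℕ) ≠ 0 → mu e = mu e' → e = e')
    (hlammu : ∀ (i : Fin n) (e : Fin s), (e : ℕ) ≠ 0 → lam i ≠ mu e)
    (E : Fin n → ℕ → (Fin n → Fin s) → F)
    (hE : codeC n r s (d - k + h) lam mu E)
    (idx : Fin h → Fin n) (R : Finset (Fin n)) (hR : R.card = d)
    (hD1 : ∀ j : Fin h, ∀ u ∈ R, ∀ a : Fin n → Fin s, (a (idx j) : ℕ) = 0 →
      E u (d - k + (j : ℕ) + 1) a = 0)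
    (hD2 : ∀ j : Fin h, ∀ u ∈ R, ∀ v : Fin s, (v : ℕ) ≠ 0 →
      ∀ a : Fin n → Fin s, (a (idx j) : ℕ) = 0 →
        E u (v : ℕ) a + E u (d - k + (j : ℕ) + 1) (Function.update a (idx j) v) = 0) :
    ∀ j : Fin h, ∀ b : ℕ, 1 ≤ b → b ≤ d - k + h → ∀ a : Fin n → Fin s,
      E (idx j) b a = 0 := by
  obtain ⟨z0, hz0⟩ : ∃ z : Fin s, (z : ℕ) = 0 := ⟨⟨0, by omega⟩, rfl⟩
  -- cardinality bound
  have hfiltcard : (univ.filter fun e : Fin s => (e : ℕ) ≠ 0).card = s - 1 := by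
    have heq : (univ.filter fun e : Fin s => (e : ℕ) ≠ 0) = univ.erase z0 := by
      ext e
      simp only [Finset.mem_filter, Finset.mem_univ, true_and, Finset.mem_erase, and_true]
      constructor
      · intro hne hcontr; subst hcontr; exact hne hz0
      · intro hne hcontr
        exact hne (Fin.ext (by rw [hcontr, hz0]))
    rw [heq, Finset.card_erase_of_mem (Finset.mem_univ _), Finset.card_univ, Fintype.card_fin]
  have hcount : (univ \ R).card + (univ.filter fun e : Fin s => (e : ℕ) ≠ 0).card ≤ r := by
    rw [Finset.card_sdiff_of_subset (Finset.subset_univ R), Finset.card_univ, Fintype.card_fin,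
      hR, hfiltcard]
    omega
  -- splitting lemma for the δ-sums
  have hsplit : ∀ (i0 : Fin n) (a : Fin n → Fin s), (a i0 : ℕ) = 0 → ∀ f : Fin n → F,
      (∑ i, if (a i : ℕ) = 0 then f i else 0)
        = f i0 + ∑ i ∈ univ.filter (fun i : Fin n => i ≠ i0 ∧ (a i : ℕ) = 0), f i := by
    intro i0 a ha f
    rw [← Finset.sum_filter]
    rw [← Finset.add_sum_erase _ f
      (show i0 ∈ univ.filter (fun i : Fin n => (a i : ℕ) = 0) by simp [ha])]
    have herase : (univ.filter (fun i : Fin n => (a i : ℕ) = 0)).erase i0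
        = univ.filter (fun i : Fin n => i ≠ i0 ∧ (a i : ℕ) = 0) := by
      ext i
      simp only [Finset.mem_erase, Finset.mem_filter, Finset.mem_univ, true_and]
    rw [herase]
  -- Step B
  have stepB : ∀ j : Fin h, ∀ a : Fin n → Fin s, (a (idx j) : ℕ) = 0 →
      (∀ i, E i (d - k + (j : ℕ) + 1) a = 0) ∧
      ∀ e : Fin s, (e : ℕ) ≠ 0 →
        E (idx j) (d - k + (j : ℕ) + 1) (Function.update a (idx j) e) = 0 := by
    intro j
    have hjh := j.isLt
    refine key_lemma lam mu hlam hmu hlammu (idx j) R hcount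
      (fun i a => E i (d - k + (j : ℕ) + 1) a)
      (fun e a => E (idx j) (d - k + (j : ℕ) + 1) (Function.update a (idx j) e))
      (fun u hu a ha => hD1 j u hu a ha) ?_
    intro t ht a ha
    have h0 := hE t ht (d - k + (j : ℕ) + 1) (by omega) (by omega) a
    rw [hsplit (idx j) a ha] at h0
    linear_combination h0
  -- Step A
  have stepA : ∀ j : Fin h, ∀ v : Fin s, (v : ℕ) ≠ 0 →
      ∀ a : Fin n → Fin s, (a (idx j) : ℕ) = 0 →
      (∀ i, E i (v : ℕ) a
        + E i (d - k + (j : ℕ) + 1) (Function.update a (idx j) v) = 0) ∧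
      ∀ e : Fin s, (e : ℕ) ≠ 0 → E (idx j) (v : ℕ) (Function.update a (idx j) e) = 0 := by
    intro j v hv
    have hjh := j.isLt
    have hvlt := v.isLt
    refine key_lemma lam mu hlam hmu hlammu (idx j) R hcount
      (fun i a => E i (v : ℕ) a
        + E i (d - k + (j : ℕ) + 1) (Function.update a (idx j) v))
      (fun e a => E (idx j) (v : ℕ) (Function.update a (idx j) e))
      (fun u hu a ha => hD2 j u hu v hv a ha) ?_
    intro t ht a ha
    have h1 := hE t ht (v : ℕ) (by omega) (by omega) a
    have h2 := hE t ht (d - k + (j : ℕ) + 1) (by omega) (by omega)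
      (Function.update a (idx j) v)
    rw [hsplit (idx j) a ha] at h1
    have hif : (∑ i, if ((Function.update a (idx j) v) i : ℕ) = 0 then
          ∑ e ∈ univ.filter (fun e : Fin s => (e : ℕ) ≠ 0),
            mu e ^ t * E i (d - k + (j : ℕ) + 1)
              (Function.update (Function.update a (idx j) v) i e) else 0)
        = ∑ i ∈ univ.filter (fun i : Fin n => i ≠ idx j ∧ (a i : ℕ) = 0),
            ∑ e ∈ univ.filter (fun e : Fin s => (e : ℕ) ≠ 0),
              mu e ^ t * E i (d - k + (j : ℕ) + 1)
                (Function.update (Function.update a i e) (idx j) v) := by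
      rw [← Finset.sum_filter]
      have hfs : univ.filter (fun i : Fin n => ((Function.update a (idx j) v) i : ℕ) = 0)
          = univ.filter (fun i : Fin n => i ≠ idx j ∧ (a i : ℕ) = 0) := by
        ext i
        simp only [Finset.mem_filter, Finset.mem_univ, true_and]
        by_cases hi : i = idx j
        · subst hi
          simp only [Function.update_self]
          constructor
          · intro hcontr; exact absurd hcontr hv
          · rintro ⟨hcontr, -⟩; exact absurd rfl hcontr
        · rw [Function.update_of_ne hi]
          simp [hi]
      rw [hfs]
      refine Finset.sum_congr rfl fun i hi => Finset.sum_congr rfl fun e _ => ?_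
      simp only [Finset.mem_filter, Finset.mem_univ, true_and] at hi
      rw [Function.update_comm (Ne.symm hi.1)]
    rw [hif] at h2
    simp only [mul_add, Finset.sum_add_distrib]
    linear_combination h1 + h2
  -- data columns at failed nodes, all layers
  have claimData : ∀ j : Fin h, ∀ v : Fin s, (v : ℕ) ≠ 0 → ∀ a : Fin n → Fin s,
      E (idx j) (v : ℕ) a = 0 := by
    intro j v hv a
    by_cases ha : (a (idx j) : ℕ) = 0
    · have h1 := (stepA j v hv a ha).1 (idx j)
      have h2 := (stepB j a ha).2 v hv
      rw [h2, add_zero] at h1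
      exact h1
    · have h := (stepA j v hv (Function.update a (idx j) z0)
        (by simp [Function.update_self, hz0])).2 (a (idx j)) ha
      rwa [Function.update_idem, Function.update_eq_self] at h
  -- conclusion
  intro j b hb hb' a
  by_cases hcase : b ≤ d - k
  · exact claimData j ⟨b, by omega⟩ (by omega : b ≠ 0) a
  · obtain ⟨j', hbj⟩ : ∃ j' : Fin h, d - k + (j' : ℕ) + 1 = b :=
      ⟨⟨b - (d - k) - 1, by omega⟩, by simp only [Fin.val_mk]; omega⟩
    by_cases ha : (a (idx j') : ℕ) = 0
    · have := (stepB j' a ha).1 (idx j)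
      rwa [hbj] at this
    · have h := (stepA j' (a (idx j')) ha (Function.update a (idx j') z0)
        (by simp [Function.update_self, hz0])).1 (idx j)
      rw [Function.update_idem, Function.update_eq_self] at h
      have hz := claimData j (a (idx j')) ha (Function.update a (idx j') z0)
      rw [hz, zero_add, hbj] at h
      exact h

/-- Correctness of the full cooperative repair scheme: the failed nodes are
`idx 0, …, idx (h-1)` (pairwise distinct, `idx j` playing the role of
`i_{j+1}`), and `R` is a helper set of size `d` disjoint from them.  If two
codewords of `C` agree, for every `j`, on all the data downloaded by node
`idx j` during the download phase, namely
`D_{1,j} = {c_{u,d-k+j+1,a} : u ∈ R, a ∈ V_{idx j}}` and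
`D_{2,j} = {c_{u,b,a} + c_{u,d-k+j+1,a(idx j,b)} : u ∈ R, b ∈ [1,d-k], a ∈ V_{idx j}}`,
then they agree on the entire contents of all `h` failed nodes. -/
theorem cooperative_repair_scheme_correct
    {F : Type*} [Field F] [Fintype F]
    (n k d h r s N : ℕ) (hk0 : 0 < k) (hr0 : 0 < r) (hh : 2 ≤ h)
    (hnk : n = k + r) (hkd : k < d) (hdn : d + h ≤ n)
    (hs : s = d - k + 1) (hN : N = (d - k + h) * s ^ n)
    (lam : Fin n → F) (mu : Fin s → F)
    (hlam : Function.Injective lam)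
    (hmu : ∀ e e' : Fin s, (e : ℕ) ≠ 0 → (e' : ℕ) ≠ 0 → mu e = mu e' → e = e')
    (hlammu : ∀ (i : Fin n) (e : Fin s), (e : ℕ) ≠ 0 → lam i ≠ mu e)
    (c c' : Fin n → ℕ → (Fin n → Fin s) → F)
    (hc : codeC n r s (d - k + h) lam mu c) (hc' : codeC n r s (d - k + h) lam mu c')
    (idx : Fin h → Fin n) (hidx : Function.Injective idx)
    (R : Finset (Fin n)) (hdisj : ∀ l : Fin h, idx l ∉ R) (hR : R.card = d)
    (hD1 : ∀ j : Fin h, ∀ u ∈ R, ∀ a : Fin n → Fin s, (a (idx j) : ℕ) = 0 →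
      c u (d - k + (j : ℕ) + 1) a = c' u (d - k + (j : ℕ) + 1) a)
    (hD2 : ∀ j : Fin h, ∀ u ∈ R, ∀ (b : ℕ) (hb : 1 ≤ b) (hb' : b ≤ d - k),
      ∀ a : Fin n → Fin s, (a (idx j) : ℕ) = 0 →
        c u b a + c u (d - k + (j : ℕ) + 1) (Function.update a (idx j) ⟨b, by omega⟩)
          = c' u b a
            + c' u (d - k + (j : ℕ) + 1) (Function.update a (idx j) ⟨b, by omega⟩)) :
    ∀ j : Fin h, ∀ (b : ℕ), 1 ≤ b → b ≤ d - k + h → ∀ a : Fin n → Fin s,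
      c (idx j) b a = c' (idx j) b a := by
  have hEcode : codeC n r s (d - k + h) lam mu
      (fun i b a => c i b a - c' i b a) := by
    intro t ht b hb hb' a
    have h1 := hc t ht b hb hb' a
    have h2 := hc' t ht b hb hb' a
    have e1 : ∑ i, lam i ^ t * (c i b a - c' i b a)
        = ∑ i, lam i ^ t * c i b a - ∑ i, lam i ^ t * c' i b a := by
      rw [← Finset.sum_sub_distrib]
      exact Finset.sum_congr rfl fun i _ => mul_sub _ _ _
    have e2 : (∑ i, if (a i : ℕ) = 0 then
          ∑ e ∈ univ.filter (fun e : Fin s => (e : ℕ) ≠ 0),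
            mu e ^ t * (c i b (Function.update a i e) - c' i b (Function.update a i e))
          else 0)
        = (∑ i, if (a i : ℕ) = 0 then
            ∑ e ∈ univ.filter (fun e : Fin s => (e : ℕ) ≠ 0),
              mu e ^ t * c i b (Function.update a i e) else 0)
          - (∑ i, if (a i : ℕ) = 0 then
              ∑ e ∈ univ.filter (fun e : Fin s => (e : ℕ) ≠ 0),
                mu e ^ t * c' i b (Function.update a i e) else 0) := by
      rw [← Finset.sum_sub_distrib]
      refine Finset.sum_congr rfl fun i _ => ?_
      split_ifs
      · rw [← Finset.sum_sub_distrib]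
        exact Finset.sum_congr rfl fun e _ => mul_sub _ _ _
      · simp
    show ∑ i, lam i ^ t * (c i b a - c' i b a)
        + (∑ i, if (a i : ℕ) = 0 then
            ∑ e ∈ univ.filter (fun e : Fin s => (e : ℕ) ≠ 0),
              mu e ^ t * (c i b (Function.update a i e) - c' i b (Function.update a i e))
            else 0) = 0
    rw [e1, e2]
    linear_combination h1 - h2
  have hD1' : ∀ j : Fin h, ∀ u ∈ R, ∀ a : Fin n → Fin s, (a (idx j) : ℕ) = 0 →
      c u (d - k + (j : ℕ) + 1) a - c' u (d - k + (j : ℕ) + 1) a = 0 :=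
    fun j u hu a ha => sub_eq_zero_of_eq (hD1 j u hu a ha)
  have hD2' : ∀ j : Fin h, ∀ u ∈ R, ∀ v : Fin s, (v : ℕ) ≠ 0 →
      ∀ a : Fin n → Fin s, (a (idx j) : ℕ) = 0 →
        (c u (v : ℕ) a - c' u (v : ℕ) a)
          + (c u (d - k + (j : ℕ) + 1) (Function.update a (idx j) v)
            - c' u (d - k + (j : ℕ) + 1) (Function.update a (idx j) v)) = 0 := by
    intro j u hu v hv a ha
    have hvlt := v.isLt
    have h2 := hD2 j u hu (v : ℕ) (by omega) (by omega) a ha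
    simp only [Fin.eta] at h2
    linear_combination h2
  intro j b hb hb' a
  exact sub_eq_zero.mp
    (repair_aux n k d h r s hnk hkd hdn hs lam mu hlam hmu hlammu
      (fun i b a => c i b a - c' i b a) hEcode idx R hR hD1' hD2' j b hb hb' a)
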